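/- arXiv:2107.07469 — 2 statements merged into one kernel-verified Lean document; each statement's English description precedes it below -/
import Mathlib

section
/- The linear functional φ : M → ℂ defined by φ(a) = α * τ₃(Aᴴ * a * A) is a state: φ(1) = 1 and, for every a ∈ M, φ(aᴴ * a) is a nonnegative real number. -/
open Matrix Kronecker

noncomputable section

/-- The Pauli z-matrix. -/
def σz : Matrix (Fin 2) (Fin 2) ℂ := !![1, 0; 0, -1]

/-- The threefold tensor product `M₂ ⊗ M₂ ⊗ M₂`, realized via Kronecker products. -/
abbrev M3 : Type := Matrix (Fin 2 × Fin 2 × Fin 2) (Fin 2 × Fin 2 × Fin 2) ℂ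

/-- `tp a b c` is the elementary tensor `a ⊗ b ⊗ c` in `M₂ ⊗ M₂ ⊗ M₂`. -/
def tp (a b c : Matrix (Fin 2) (Fin 2) ℂ) : M3 := a ⊗ₖ (b ⊗ₖ c)

def K₀ (β : ℝ) : ℝ := (Real.exp β + 1) / 2
def K₃ (β : ℝ) : ℝ := (Real.exp β - 1) / 2
def R₀ (β J : ℝ) : ℝ := (Real.exp (J * β) + 1) / 2
def R₃ (β J : ℝ) : ℝ := (Real.exp (J * β) - 1) / 2

/-- `K¹² = K₀•(1⊗1⊗1) + K₃•(σ⊗σ⊗1)`. -/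
def K12 (β : ℝ) : M3 := ((K₀ β : ℝ) : ℂ) • tp 1 1 1 + ((K₃ β : ℝ) : ℂ) • tp σz σz 1

/-- `K¹³ = K₀•(1⊗1⊗1) + K₃•(σ⊗1⊗σ)`. -/
def K13 (β : ℝ) : M3 := ((K₀ β : ℝ) : ℂ) • tp 1 1 1 + ((K₃ β : ℝ) : ℂ) • tp σz 1 σz

/-- `L²³ = R₀•(1⊗1⊗1) + R₃•(1⊗σ⊗σ)`. -/
def L23 (β J : ℝ) : M3 := ((R₀ β J : ℝ) : ℂ) • tp 1 1 1 + ((R₃ β J : ℝ) : ℂ) • tp 1 σz σz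

/-- The transfer operator `A = K¹² K¹³ L²³` of the Ising model with competing interactions. -/
def A (β J : ℝ) : M3 := K12 β * K13 β * L23 β J

open scoped ComplexOrder

/-- The normalizing constant `α`. -/
def αc (β J : ℝ) : ℝ :=
  4 / (Real.exp (2 * J * β) * (Real.exp (4 * β) + 1) + 2 * Real.exp (2 * β))

/-- The normalized trace on `M₂ ⊗ M₂ ⊗ M₂`. -/
def τ₃ (m : M3) : ℂ := (1 / 8 : ℂ) * Matrix.trace m

/-- The functional `φ(a) = α τ₃(Aᴴ a A)`. -/
def φ (β J : ℝ) (a : M3) : ℂ := ((αc β J : ℝ) : ℂ) * τ₃ ((A β J)ᴴ * a * A β J)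

lemma tp_mul (a b c d e f : Matrix (Fin 2) (Fin 2) ℂ) :
    tp a b c * tp d e f = tp (a*d) (b*e) (c*f) := by
  simp [tp, ← Matrix.mul_kronecker_mul]

lemma σz_sq : σz * σz = 1 := by
  ext i j; fin_cases i <;> fin_cases j <;>
    simp [σz, Matrix.mul_apply, Fin.sum_univ_two, Matrix.one_apply]

lemma σz_herm : σzᴴ = σz := by
  ext i j; fin_cases i <;> fin_cases j <;> simp [σz]

lemma tp_conj (a b c : Matrix (Fin 2) (Fin 2) ℂ) : (tp a b c)ᴴ = tp aᴴ bᴴ cᴴ := by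
  ext ⟨i1,i2,i3⟩ ⟨j1,j2,j3⟩
  simp [tp, Matrix.conjTranspose_apply, Matrix.kroneckerMap_apply, star_mul']

lemma trace_σz : Matrix.trace σz = 0 := by simp [σz, Matrix.trace_fin_two]

lemma trace_tp (a b c : Matrix (Fin 2) (Fin 2) ℂ) :
    Matrix.trace (tp a b c) = Matrix.trace a * (Matrix.trace b * Matrix.trace c) := by
  simp [tp, Matrix.trace_kronecker]

lemma A_eq (β J : ℝ) : A β J =
    ((K₀ β*K₀ β*R₀ β J + K₃ β*K₃ β*R₃ β J : ℝ):ℂ) • tp 1 1 1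
  + ((K₀ β*K₃ β*R₀ β J + K₃ β*K₀ β*R₃ β J : ℝ):ℂ) • tp σz 1 σz
  + ((K₃ β*K₀ β*R₀ β J + K₀ β*K₃ β*R₃ β J : ℝ):ℂ) • tp σz σz 1
  + ((K₃ β*K₃ β*R₀ β J + K₀ β*K₀ β*R₃ β J : ℝ):ℂ) • tp 1 σz σz := by
  simp only [A, K12, K13, L23, add_mul, mul_add, Matrix.smul_mul, Matrix.mul_smul,
    tp_mul, σz_sq, one_mul, mul_one, smul_smul]
  push_cast
  module

lemma trace_AHA (β J : ℝ) : Matrix.trace ((A β J)ᴴ * A β J) =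
    ((2 * (Real.exp (2*J*β) * (Real.exp (4*β) + 1) + 2*Real.exp (2*β)) : ℝ) : ℂ) := by
  have h1 : Real.exp (2*J*β) = Real.exp (J*β) * Real.exp (J*β) := by
    rw [← Real.exp_add]; ring_nf
  have h2 : Real.exp (4*β) = Real.exp β * Real.exp β * Real.exp β * Real.exp β := by
    rw [← Real.exp_add, ← Real.exp_add, ← Real.exp_add]; ring_nf
  have h3 : Real.exp (2*β) = Real.exp β * Real.exp β := by
    rw [← Real.exp_add]; ring_nf
  rw [h1, h2, h3, A_eq]
  simp only [Matrix.conjTranspose_add, Matrix.conjTranspose_smul, tp_conj, σz_herm,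
    Matrix.conjTranspose_one, Complex.star_def, Complex.conj_ofReal,
    add_mul, mul_add, Matrix.smul_mul, Matrix.mul_smul, tp_mul, σz_sq, one_mul, mul_one,
    smul_smul, Matrix.trace_add, Matrix.trace_smul, trace_tp, trace_σz, Matrix.trace_one]
  simp only [K₀, K₃, R₀, R₃, Fintype.card_fin, smul_eq_mul]
  push_cast
  ring

lemma trace_CHC {n : Type*} [Fintype n] (B : Matrix n n ℂ) : 0 ≤ Matrix.trace (Bᴴ * B) := by
  simp only [Matrix.trace, Matrix.diag, Matrix.mul_apply, Matrix.conjTranspose_apply]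
  exact Finset.sum_nonneg fun i _ => Finset.sum_nonneg fun j _ => star_mul_self_nonneg _

/-- `φ` is a state: it is unital and positive. -/
theorem φ_is_state (β J : ℝ) (hβ : 0 < β) (hJ : 0 < J) :
    φ β J 1 = 1 ∧ ∀ a : M3, 0 ≤ φ β J (aᴴ * a) := by
  have hD : (0:ℝ) < Real.exp (2*J*β) * (Real.exp (4*β) + 1) + 2 * Real.exp (2*β) := by
    positivity
  constructor
  · rw [φ, mul_one, τ₃, trace_AHA]
    rw [αc]
    push_cast
    rw [div_mul_eq_mul_div, div_mul_eq_mul_div, div_eq_iff]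
    · ring
    · have hD' := Complex.ofReal_ne_zero.mpr hD.ne'
      push_cast at hD'
      exact hD'
  · intro a
    have h : (A β J)ᴴ * (aᴴ * a) * A β J = (a * A β J)ᴴ * (a * A β J) := by
      simp [Matrix.conjTranspose_mul, Matrix.mul_assoc]
    rw [φ, τ₃, h]
    have h1 : (0:ℂ) ≤ ((αc β J : ℝ) : ℂ) := by
      rw [Complex.zero_le_real]
      exact div_nonneg (by norm_num) hD.le
    refine mul_nonneg h1 (mul_nonneg ?_ (trace_CHC _))
    rw [show ((1:ℂ)/8) = (((1:ℝ)/8 : ℝ) : ℂ) by norm_num, Complex.zero_le_real]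
    norm_num
end
end

section
/- For every a₀ : Matrix (Fin 2) (Fin 2) ℂ and every c ∈ M, α³ * τ₇(ι_0(a₀) * ι_{1,3,4}(c) * D) = α * τ₃((a₀ ⊗ 𝓔(c) ⊗ 1₂) * (Aᴴ * A)), where 𝓔(c) = α • PT(Aᴴ * c * A). (This is the localized Markov-state property φ↾_{A_{P(x)∪{x}∪S(x)}} = φ↾_{A_{P(x)∪{x}}} ∘ E_x of the state φ_α at the vertex x = (1) of the Cayley tree of order 2, whose predecessor is the root o and whose direct successors are (1,1),(1,2).) -/
open Matrix Kronecker

noncomputable section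

/-- The sevenfold tensor product `M₂^{⊗7}`: sites `0,…,6` are the vertices
`o,(1),(2),(1,1),(1,2),(2,1),(2,2)` of the first three levels of the Cayley tree of order 2. -/
abbrev B7 : Type := Matrix (Fin 7 → Fin 2) (Fin 7 → Fin 2) ℂ

/-- The unital embedding of `M₂ ⊗ M₂ ⊗ M₂` into `M₂^{⊗7}` acting on sites `p, q, r`. -/
def emb (p q r : Fin 7) (m : M3) : B7 :=
  Matrix.of fun f g =>
    m (f p, f q, f r) (g p, g q, g r) *
      ∏ j ∈ Finset.univ.filter (fun j => j ∉ ({p, q, r} : Finset (Fin 7))),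
        (if f j = g j then (1 : ℂ) else 0)

/-- The normalized trace on `M₂^{⊗7}`. -/
def τ₇ (b : B7) : ℂ := (1 / 128 : ℂ) * Matrix.trace b

/-- The level-2 density `D = ι₀₁₂(AᴴA) ι₁₃₄(AᴴA) ι₂₅₆(AᴴA)`. -/
def D (β J : ℝ) : B7 :=
  emb 0 1 2 ((A β J)ᴴ * A β J) * emb 1 3 4 ((A β J)ᴴ * A β J) * emb 2 5 6 ((A β J)ᴴ * A β J)

/-- The normalized partial trace over the second and third tensor factors. -/
def PT (m : M3) : Matrix (Fin 2) (Fin 2) ℂ :=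
  Matrix.of fun s t => (1 / 4 : ℂ) * ∑ u : Fin 2, ∑ v : Fin 2, m (s, u, v) (t, u, v)

/-- The transition expectation `𝓔(c) = α • PT(Aᴴ c A)`. -/
def TE (β J : ℝ) (c : M3) : Matrix (Fin 2) (Fin 2) ℂ :=
  ((αc β J : ℝ) : ℂ) • PT ((A β J)ᴴ * c * A β J)

/-- The single-site unital embedding of `M₂` into `M₂^{⊗7}` at site `p`. -/
def emb₁ (p : Fin 7) (a : Matrix (Fin 2) (Fin 2) ℂ) : B7 :=
  Matrix.of fun f g =>
    a (f p) (g p) *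
      ∏ j ∈ Finset.univ.filter (fun j => j ≠ p), (if f j = g j then (1 : ℂ) else 0)

-- auxiliary
def zv : Fin 2 → ℝ := ![1, -1]
def dAr (β J : ℝ) : Fin 2 × Fin 2 × Fin 2 → ℝ := fun p =>
  ((K₀ β + K₃ β * (zv p.1 * zv p.2.1)) * (K₀ β + K₃ β * (zv p.1 * zv p.2.2))) *
    (R₀ β J + R₃ β J * (zv p.2.1 * zv p.2.2))

lemma σz_diag : σz = Matrix.diagonal (fun i => ((zv i : ℝ) : ℂ)) := by
  ext i j
  fin_cases i <;> fin_cases j <;> simp [σz, zv, Matrix.diagonal]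

lemma tp_diag (a b c : Fin 2 → ℂ) :
    tp (Matrix.diagonal a) (Matrix.diagonal b) (Matrix.diagonal c) =
      Matrix.diagonal (fun p => a p.1 * (b p.2.1 * c p.2.2)) := by
  unfold tp
  rw [Matrix.diagonal_kronecker_diagonal, Matrix.diagonal_kronecker_diagonal]

lemma K12_diag (β : ℝ) :
    K12 β = Matrix.diagonal (fun p => ((K₀ β + K₃ β * (zv p.1 * zv p.2.1) : ℝ) : ℂ)) := by
  unfold K12
  rw [σz_diag, show (1 : Matrix (Fin 2) (Fin 2) ℂ) = Matrix.diagonal (fun _ => 1) from Matrix.diagonal_one.symm,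
    tp_diag, tp_diag, ← Matrix.diagonal_smul, ← Matrix.diagonal_smul, Matrix.diagonal_add]
  exact congrArg Matrix.diagonal (funext fun p => by
    simp only [Pi.add_apply, Pi.smul_apply, smul_eq_mul]
    push_cast
    ring)

lemma K13_diag (β : ℝ) :
    K13 β = Matrix.diagonal (fun p => ((K₀ β + K₃ β * (zv p.1 * zv p.2.2) : ℝ) : ℂ)) := by
  unfold K13
  rw [σz_diag, show (1 : Matrix (Fin 2) (Fin 2) ℂ) = Matrix.diagonal (fun _ => 1) from Matrix.diagonal_one.symm,
    tp_diag, tp_diag, ← Matrix.diagonal_smul, ← Matrix.diagonal_smul, Matrix.diagonal_add]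
  exact congrArg Matrix.diagonal (funext fun p => by
    simp only [Pi.add_apply, Pi.smul_apply, smul_eq_mul]
    push_cast
    ring)

lemma L23_diag (β J : ℝ) :
    L23 β J = Matrix.diagonal (fun p => ((R₀ β J + R₃ β J * (zv p.2.1 * zv p.2.2) : ℝ) : ℂ)) := by
  unfold L23
  rw [σz_diag, show (1 : Matrix (Fin 2) (Fin 2) ℂ) = Matrix.diagonal (fun _ => 1) from Matrix.diagonal_one.symm,
    tp_diag, tp_diag, ← Matrix.diagonal_smul, ← Matrix.diagonal_smul, Matrix.diagonal_add]
  exact congrArg Matrix.diagonal (funext fun p => by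
    simp only [Pi.add_apply, Pi.smul_apply, smul_eq_mul]
    push_cast
    ring)

lemma A_diag (β J : ℝ) : A β J = Matrix.diagonal (fun p => ((dAr β J p : ℝ) : ℂ)) := by
  unfold A
  rw [K12_diag, K13_diag, L23_diag, Matrix.diagonal_mul_diagonal, Matrix.diagonal_mul_diagonal]
  exact congrArg Matrix.diagonal (funext fun p => by
    push_cast [dAr]
    ring)

lemma G_diag (β J : ℝ) :
    (A β J)ᴴ * A β J = Matrix.diagonal (fun p => (((dAr β J p) ^ 2 : ℝ) : ℂ)) := by
  rw [A_diag, Matrix.diagonal_conjTranspose, Matrix.diagonal_mul_diagonal]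
  exact congrArg Matrix.diagonal (funext fun p => by
    simp only [Pi.star_apply, Complex.star_def, Complex.conj_ofReal]
    push_cast
    ring)

lemma emb_diag (p q r : Fin 7) (d : Fin 2 × Fin 2 × Fin 2 → ℂ) :
    emb p q r (Matrix.diagonal d) = Matrix.diagonal (fun f => d (f p, f q, f r)) := by
  ext f g
  by_cases h : f = g
  · subst h
    simp [emb, Matrix.diagonal_apply_eq]
  · rw [Matrix.diagonal_apply_ne _ h]
    obtain ⟨j, hj⟩ := Function.ne_iff.mp h
    by_cases hmem : j ∈ ({p, q, r} : Finset (Fin 7))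
    · have hne : (f p, f q, f r) ≠ (g p, g q, g r) := by
        simp only [Finset.mem_insert, Finset.mem_singleton] at hmem
        rcases hmem with h1 | h1 | h1 <;> subst h1 <;>
          simp only [ne_eq, Prod.mk.injEq, not_and] <;> tauto
      simp [emb, Matrix.diagonal_apply_ne _ hne]
    · simp only [emb, Matrix.of_apply]
      refine mul_eq_zero_of_right _ (Finset.prod_eq_zero (i := j) ?_ (by simp [hj]))
      simpa using hmem

lemma diag_XY (a₀ : Matrix (Fin 2) (Fin 2) ℂ) (c : M3) (f : Fin 7 → Fin 2) :
    (emb₁ 0 a₀ * emb 1 3 4 c) f f = a₀ (f 0) (f 0) * c (f 1, f 3, f 4) (f 1, f 3, f 4) := by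
  rw [Matrix.mul_apply]
  rw [Finset.sum_eq_single f]
  · simp [emb₁, emb]
  · intro g _ hg
    obtain ⟨j, hj⟩ := Function.ne_iff.mp hg
    by_cases h0 : j = 0
    · subst h0
      have hz : emb 1 3 4 c g f = 0 := by
        refine mul_eq_zero_of_right _ (Finset.prod_eq_zero (i := 0) (by decide) ?_)
        simp [hj]
      simp [hz]
    · have hz : emb₁ 0 a₀ f g = 0 := by
        refine mul_eq_zero_of_right _ (Finset.prod_eq_zero (i := j) (by simp [h0]) ?_)
        simp [Ne.symm hj]
      simp [hz]
  · simp

def grC (β J : ℝ) : Fin 2 × Fin 2 × Fin 2 → ℂ := fun p => ((dAr β J p ^ 2 : ℝ) : ℂ)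

lemma trace7 (β J : ℝ) (a₀ : Matrix (Fin 2) (Fin 2) ℂ) (c : M3) :
    τ₇ (emb₁ 0 a₀ * emb 1 3 4 c * D β J) =
      (1 / 128 : ℂ) * ∑ f : Fin 7 → Fin 2,
        a₀ (f 0) (f 0) * c (f 1, f 3, f 4) (f 1, f 3, f 4) *
          (grC β J (f 0, f 1, f 2) * grC β J (f 1, f 3, f 4) * grC β J (f 2, f 5, f 6)) := by
  unfold D
  rw [G_diag]
  rw [show (Matrix.diagonal fun p => (((dAr β J p) ^ 2 : ℝ) : ℂ)) = Matrix.diagonal (grC β J) from rfl,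
    emb_diag, emb_diag, emb_diag, Matrix.diagonal_mul_diagonal, Matrix.diagonal_mul_diagonal]
  unfold τ₇
  rw [Matrix.trace]
  congr 1
  refine Finset.sum_congr rfl fun f _ => ?_
  rw [Matrix.diag_apply, Matrix.mul_diagonal, diag_XY]

lemma trace3 (β J : ℝ) (a₀ : Matrix (Fin 2) (Fin 2) ℂ) (c : M3) :
    τ₃ (tp a₀ (TE β J c) 1 * ((A β J)ᴴ * A β J)) =
      (1 / 8 : ℂ) * ∑ s : Fin 2, ∑ u : Fin 2, ∑ v : Fin 2,
        a₀ s s * (((αc β J : ℝ) : ℂ) * ((1 / 4 : ℂ) *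
          ∑ m : Fin 2, ∑ n : Fin 2, grC β J (u, m, n) * c (u, m, n) (u, m, n))) *
            grC β J (s, u, v) := by
  rw [G_diag]
  rw [show (Matrix.diagonal fun p => (((dAr β J p) ^ 2 : ℝ) : ℂ)) = Matrix.diagonal (grC β J) from rfl]
  unfold τ₃
  rw [Matrix.trace]
  congr 1
  rw [Fintype.sum_prod_type]
  refine Finset.sum_congr rfl fun s _ => ?_
  rw [Fintype.sum_prod_type]
  refine Finset.sum_congr rfl fun u _ => Finset.sum_congr rfl fun v _ => ?_
  rw [Matrix.diag_apply, Matrix.mul_diagonal]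
  congr 1
  show tp a₀ (TE β J c) 1 (s, u, v) (s, u, v) = _
  unfold tp
  rw [Matrix.kroneckerMap_apply, Matrix.kroneckerMap_apply]
  simp only [Matrix.one_apply_eq, mul_one]
  congr 1
  unfold TE
  rw [Matrix.smul_apply, smul_eq_mul]
  congr 1
  unfold PT
  rw [Matrix.of_apply]
  congr 1
  refine Finset.sum_congr rfl fun m _ => Finset.sum_congr rfl fun n _ => ?_
  rw [A_diag, Matrix.diagonal_conjTranspose]
  rw [Matrix.mul_diagonal, Matrix.diagonal_mul]
  simp only [Pi.star_apply, Complex.star_def, Complex.conj_ofReal, grC]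
  push_cast
  ring

lemma hkeyR (β J : ℝ) (v : Fin 2) :
    αc β J * (∑ p : Fin 2, ∑ q : Fin 2, dAr β J (v, p, q) ^ 2) = 4 := by
  have hx2 : Real.exp (2 * β) = Real.exp β ^ 2 := by rw [two_mul, Real.exp_add]; ring
  have hx4 : Real.exp (4 * β) = Real.exp β ^ 4 := by
    rw [show (4 : ℝ) * β = β + β + β + β by ring, Real.exp_add, Real.exp_add, Real.exp_add]; ring
  have hy2 : Real.exp (2 * J * β) = Real.exp (J * β) ^ 2 := by
    rw [show (2 : ℝ) * J * β = J * β + J * β by ring, Real.exp_add]; ring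
  have hden : 0 < Real.exp (2 * J * β) * (Real.exp (4 * β) + 1) + 2 * Real.exp (2 * β) := by
    positivity
  unfold αc
  rw [div_mul_eq_mul_div, div_eq_iff (ne_of_gt hden)]
  rw [hx2, hx4, hy2]
  fin_cases v <;>
    · simp [Fin.sum_univ_two, dAr, K₀, K₃, R₀, R₃, zv]
      ring

lemma hkeyC (β J : ℝ) (v : Fin 2) :
    ((αc β J : ℝ) : ℂ) * (∑ p : Fin 2, ∑ q : Fin 2, grC β J (v, p, q)) = 4 := by
  have := hkeyR β J v
  unfold grC
  push_cast
  exact_mod_cast congrArg (Complex.ofReal) this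

def e7 : (Fin 2 × Fin 2 × Fin 2 × Fin 2 × Fin 2 × Fin 2 × Fin 2) ≃ (Fin 7 → Fin 2) where
  toFun t := ![t.1, t.2.1, t.2.2.1, t.2.2.2.1, t.2.2.2.2.1, t.2.2.2.2.2.1, t.2.2.2.2.2.2]
  invFun f := (f 0, f 1, f 2, f 3, f 4, f 5, f 6)
  left_inv t := rfl
  right_inv f := by funext j; fin_cases j <;> rfl

lemma hconv (F : Fin 2 → Fin 2 → Fin 2 → Fin 2 → Fin 2 → Fin 2 → Fin 2 → ℂ) :
    (∑ f : Fin 7 → Fin 2, F (f 0) (f 1) (f 2) (f 3) (f 4) (f 5) (f 6)) =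
      ∑ s, ∑ u, ∑ v, ∑ m, ∑ n, ∑ p, ∑ q, F s u v m n p q := by
  rw [← Fintype.sum_equiv e7
    (fun t => F t.1 t.2.1 t.2.2.1 t.2.2.2.1 t.2.2.2.2.1 t.2.2.2.2.2.1 t.2.2.2.2.2.2)
    (fun f => F (f 0) (f 1) (f 2) (f 3) (f 4) (f 5) (f 6)) (fun t => rfl)]
  simp only [Fintype.sum_prod_type]

lemma final (α' : ℂ) (a : Fin 2 → ℂ) (cc g : Fin 2 × Fin 2 × Fin 2 → ℂ)
    (hk : ∀ v : Fin 2, α' * (∑ p : Fin 2, ∑ q : Fin 2, g (v, p, q)) = 4) :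
    α' ^ 3 * ((1 / 128 : ℂ) * ∑ s : Fin 2, ∑ u : Fin 2, ∑ v : Fin 2, ∑ m : Fin 2, ∑ n : Fin 2,
        ∑ p : Fin 2, ∑ q : Fin 2,
        a s * cc (u, m, n) * (g (s, u, v) * g (u, m, n) * g (v, p, q)))
    = α' * ((1 / 8 : ℂ) * ∑ s : Fin 2, ∑ u : Fin 2, ∑ v : Fin 2,
        a s * (α' * ((1 / 4 : ℂ) * ∑ m : Fin 2, ∑ n : Fin 2, g (u, m, n) * cc (u, m, n))) * g (s, u, v)) := by
  have h0 := hk 0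
  have h1 := hk 1
  simp only [Fin.sum_univ_two] at h0 h1 ⊢
  linear_combination (α' ^ 2 / 128 * (a 0 * cc (0,0,0) * g (0,0,0) * g (0,0,0) + a 0 * cc (0,0,1) * g (0,0,0) * g (0,0,1) + a 0 * cc (0,1,0) * g (0,0,0) * g (0,1,0) + a 0 * cc (0,1,1) * g (0,0,0) * g (0,1,1) + a 0 * cc (1,0,0) * g (0,1,0) * g (1,0,0) + a 0 * cc (1,0,1) * g (0,1,0) * g (1,0,1) + a 0 * cc (1,1,0) * g (0,1,0) * g (1,1,0) + a 0 * cc (1,1,1) * g (0,1,0) * g (1,1,1) + a 1 * cc (0,0,0) * g (1,0,0) * g (0,0,0) + a 1 * cc (0,0,1) * g (1,0,0) * g (0,0,1) + a 1 * cc (0,1,0) * g (1,0,0) * g (0,1,0) + a 1 * cc (0,1,1) * g (1,0,0) * g (0,1,1) + a 1 * cc (1,0,0) * g (1,1,0) * g (1,0,0) + a 1 * cc (1,0,1) * g (1,1,0) * g (1,0,1) + a 1 * cc (1,1,0) * g (1,1,0) * g (1,1,0) + a 1 * cc (1,1,1) * g (1,1,0) * g (1,1,1))) * h0 + (α' ^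 2 / 128 * (a 0 * cc (0,0,0) * g (0,0,1) * g (0,0,0) + a 0 * cc (0,0,1) * g (0,0,1) * g (0,0,1) + a 0 * cc (0,1,0) * g (0,0,1) * g (0,1,0) + a 0 * cc (0,1,1) * g (0,0,1) * g (0,1,1) + a 0 * cc (1,0,0) * g (0,1,1) * g (1,0,0) + a 0 * cc (1,0,1) * g (0,1,1) * g (1,0,1) + a 0 * cc (1,1,0) * g (0,1,1) * g (1,1,0) + a 0 * cc (1,1,1) * g (0,1,1) * g (1,1,1) + a 1 * cc (0,0,0) * g (1,0,1) * g (0,0,0) + a 1 * cc (0,0,1) * g (1,0,1) * g (0,0,1) + a 1 * cc (0,1,0) * g (1,0,1) * g (0,1,0) + a 1 * cc (0,1,1) * g (1,0,1) * g (0,1,1) + a 1 * cc (1,0,0) * g (1,1,1) * g (1,0,0) + a 1 * cc (1,0,1) * g (1,1,1) * g (1,0,1) + a 1 * cc (1,1,0) * g (1,1,1) * g (1,1,0) + a 1 * cc (1,1,1) * g (1,1,1) * g (1,1,1))) * h1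


/-- The localized Markov-state property of `φ_α` at the vertex `x = (1)` of the Cayley
tree of order 2: `φ↾_{A_{P(x)∪{x}∪S(x)}} = φ↾_{A_{P(x)∪{x}}} ∘ E_x`. -/
theorem localized_markov_property (β J : ℝ) (hβ : 0 < β) (hJ : 0 < J)
    (a₀ : Matrix (Fin 2) (Fin 2) ℂ) (c : M3) :
    ((αc β J : ℝ) : ℂ) ^ 3 * τ₇ (emb₁ 0 a₀ * emb 1 3 4 c * D β J) =
      ((αc β J : ℝ) : ℂ) * τ₃ (tp a₀ (TE β J c) 1 * ((A β J)ᴴ * A β J)) := by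
  rw [trace7, trace3]
  rw [hconv (fun s u v m n p q => a₀ s s * c (u, m, n) (u, m, n) *
    (grC β J (s, u, v) * grC β J (u, m, n) * grC β J (v, p, q)))]
  exact final _ (fun s => a₀ s s) (fun t => c t t) (grC β J) (hkeyC β J)
end
end
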